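/- Define ψ(p,q,k) = E_p + E_q − E_k − E_{p+q−k} on (R^3)^3, where E_l = sqrt(|l|²+m²) with m > 0. If the gradient of ψ vanishes at a point (p,q,k), then p/E_p = q/E_q. -/

import Mathlib

noncomputable def E (m : ℝ) (l : EuclideanSpace ℝ (Fin 3)) : ℝ :=
  Real.sqrt (‖l‖ ^ 2 + m ^ 2)

noncomputable def psi (m : ℝ)
    (x : EuclideanSpace ℝ (Fin 3) × EuclideanSpace ℝ (Fin 3) × EuclideanSpace ℝ (Fin 3)) : ℝ :=
  E m x.1 + E m x.2.1 - E m x.2.2 - E m (x.1 + x.2.1 - x.2.2)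

local notation "V" => EuclideanSpace ℝ (Fin 3)

lemma E_pos (m : ℝ) (hm : 0 < m) (l : V) : 0 < E m l := by
  have : (0:ℝ) < ‖l‖ ^ 2 + m ^ 2 := by positivity
  exact Real.sqrt_pos.2 this

lemma hasFDerivAt_E (m : ℝ) (hm : 0 < m) (l : V) :
    HasFDerivAt (E m) ((E m l)⁻¹ • (innerSL ℝ l : V →L[ℝ] ℝ)) l := by
  have ht : (0:ℝ) < ‖l‖ ^ 2 + m ^ 2 := by positivity
  have h1 : HasFDerivAt (fun x : V => ‖x‖ ^ 2 + m ^ 2)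
      ((2 : ℕ) • (innerSL ℝ l : V →L[ℝ] ℝ)) l := by
    simpa using ((hasStrictFDerivAt_norm_sq l).hasFDerivAt).add_const (m ^ 2)
  have h2 := h1.sqrt ht.ne'
  have hE : E m l = Real.sqrt (‖l‖ ^ 2 + m ^ 2) := rfl
  have hne : Real.sqrt (‖l‖ ^ 2 + m ^ 2) ≠ 0 := (Real.sqrt_pos.2 ht).ne'
  have heq : (E m l)⁻¹ • (innerSL ℝ l : V →L[ℝ] ℝ)
      = (1 / (2 * Real.sqrt (‖l‖ ^ 2 + m ^ 2))) • (2:ℕ) • (innerSL ℝ l : V →L[ℝ] ℝ) := by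
    ext v
    simp only [ContinuousLinearMap.smul_apply, smul_eq_mul, hE, ← Nat.cast_smul_eq_nsmul ℝ,
      Nat.cast_ofNat]
    field_simp
  rw [heq]
  exact h2

theorem stmt_5 (m : ℝ) (hm : 0 < m)
    (p q k : EuclideanSpace ℝ (Fin 3))
    (hgrad : fderiv ℝ (psi m) (p, q, k) = 0) :
    (E m p)⁻¹ • p = (E m q)⁻¹ • q := by
  set s : V := p + q - k with hs
  have hfst : HasFDerivAt (fun x : V × V × V => x.1)
      (ContinuousLinearMap.fst ℝ V (V × V)) (p, q, k) := hasFDerivAt_fst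
  have hsnd : HasFDerivAt (fun x : V × V × V => x.2)
      (ContinuousLinearMap.snd ℝ V (V × V)) (p, q, k) := hasFDerivAt_snd
  have hq' : HasFDerivAt (fun x : V × V × V => x.2.1)
      ((ContinuousLinearMap.fst ℝ V V).comp (ContinuousLinearMap.snd ℝ V (V × V)))
      (p, q, k) := hasFDerivAt_fst.comp _ hsnd
  have hk' : HasFDerivAt (fun x : V × V × V => x.2.2)
      ((ContinuousLinearMap.snd ℝ V V).comp (ContinuousLinearMap.snd ℝ V (V × V)))
      (p, q, k) := hasFDerivAt_snd.comp _ hsnd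
  have hlin : HasFDerivAt (fun x : V × V × V => x.1 + x.2.1 - x.2.2)
      (ContinuousLinearMap.fst ℝ V (V × V)
        + (ContinuousLinearMap.fst ℝ V V).comp (ContinuousLinearMap.snd ℝ V (V × V))
        - (ContinuousLinearMap.snd ℝ V V).comp (ContinuousLinearMap.snd ℝ V (V × V)))
      (p, q, k) := (hfst.add hq').sub hk'
  have hpsi : HasFDerivAt (psi m)
      (((E m p)⁻¹ • (innerSL ℝ p : V →L[ℝ] ℝ)).comp (ContinuousLinearMap.fst ℝ V (V × V))
        + ((E m q)⁻¹ • (innerSL ℝ q : V →L[ℝ] ℝ)).comp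
            ((ContinuousLinearMap.fst ℝ V V).comp (ContinuousLinearMap.snd ℝ V (V × V)))
        - ((E m k)⁻¹ • (innerSL ℝ k : V →L[ℝ] ℝ)).comp
            ((ContinuousLinearMap.snd ℝ V V).comp (ContinuousLinearMap.snd ℝ V (V × V)))
        - ((E m s)⁻¹ • (innerSL ℝ s : V →L[ℝ] ℝ)).comp
            (ContinuousLinearMap.fst ℝ V (V × V)
              + (ContinuousLinearMap.fst ℝ V V).comp (ContinuousLinearMap.snd ℝ V (V × V))
              - (ContinuousLinearMap.snd ℝ V V).comp (ContinuousLinearMap.snd ℝ V (V × V))))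
      (p, q, k) := by
    have h4 : HasFDerivAt (fun x : V × V × V => E m (x.1 + x.2.1 - x.2.2)) (((E m s)⁻¹ • (innerSL ℝ s : V →L[ℝ] ℝ)).comp
              (ContinuousLinearMap.fst ℝ V (V × V)
                + (ContinuousLinearMap.fst ℝ V V).comp (ContinuousLinearMap.snd ℝ V (V × V))
                - (ContinuousLinearMap.snd ℝ V V).comp (ContinuousLinearMap.snd ℝ V (V × V)))) (p, q, k) := by
      have hE4 : HasFDerivAt (E m) ((E m s)⁻¹ • (innerSL ℝ s : V →L[ℝ] ℝ))
          ((fun x : V × V × V => x.1 + x.2.1 - x.2.2) (p, q, k)) := hasFDerivAt_E m hm s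
      exact hE4.comp (p, q, k) hlin
    exact ((((hasFDerivAt_E m hm p).comp _ hfst).add
      ((hasFDerivAt_E m hm q).comp _ hq')).sub
      ((hasFDerivAt_E m hm k).comp _ hk')).sub
      h4
  have hD := hpsi.fderiv
  rw [hgrad] at hD
  have key : ∀ v : V,
      (E m p)⁻¹ * inner ℝ p v - (E m s)⁻¹ * inner ℝ s v = 0 ∧
      (E m q)⁻¹ * inner ℝ q v - (E m s)⁻¹ * inner ℝ s v = 0 := by
    intro v
    constructor
    · have := congrArg (fun L => L (v, 0, 0)) hD
      simpa using this.symm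
    · have := congrArg (fun L => L (0, v, 0)) hD
      simpa using this.symm
  have key2 : ∀ v : V, inner ℝ ((E m p)⁻¹ • p) v = (inner ℝ ((E m q)⁻¹ • q) v : ℝ) := by
    intro v
    obtain ⟨h1, h2⟩ := key v
    rw [real_inner_smul_left, real_inner_smul_left]
    linarith
  exact ext_inner_right ℝ key2
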